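/- Let a be a real number with 0 < a ≤ 1, and let γ > 0 satisfy (2+γ)·ln(2+γ) − γ·ln γ ≤ 2. Let w ∈ ℝ satisfy w·e^{w} = γ^{a}·ln γ, set c = w / ln γ and α' = a − c, and assume 0 < α' ≤ 1. Then α' + e^{−γ}·γ^{α'} / Γ(α', γ) ≤ a. -/

import Mathlib

open Real MeasureTheory

/-- The upper incomplete gamma function `Γ(a, x) = ∫ₓ^∞ e^{−u} u^{a−1} du`. -/
noncomputable def uincGamma (a x : ℝ) : ℝ :=
  ∫ u in Set.Ioi x, Real.exp (-u) * u ^ (a - 1)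

section Aux

open Set

lemma aux_int_rpow {s γ : ℝ} (hs : 0 < s) (hγ : 0 ≤ γ) :
    IntegrableOn (fun u => Real.exp (-u) * u ^ (s - 1)) (Ioi γ) :=
  (Real.GammaIntegral_convergent hs).mono_set (Ioi_subset_Ioi hγ)

lemma aux_int_log {γ : ℝ} (hγ : 0 ≤ γ) :
    IntegrableOn (fun u => Real.exp (-u) * Real.log u) (Ioi γ) := by
  refine IntegrableOn.mono_set ?_ (Ioi_subset_Ioi hγ)
  have hmeas : AEStronglyMeasurable (fun u => Real.exp (-u) * Real.log u)
      (volume.restrict (Ioi (0:ℝ))) :=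
    ((Real.measurable_exp.comp measurable_neg).mul Real.measurable_log).aestronglyMeasurable
  have hint : IntegrableOn
      (fun u => 2 * (Real.exp (-u) * u ^ ((1/2:ℝ) - 1)) + Real.exp (-u) * u ^ ((2:ℝ) - 1))
      (Ioi (0:ℝ)) :=
    ((aux_int_rpow (by norm_num) le_rfl).const_mul 2).add (aux_int_rpow (by norm_num) le_rfl)
  refine Integrable.mono' hint hmeas ?_
  rw [ae_restrict_iff' measurableSet_Ioi]
  refine ae_of_all _ fun u hu => ?_
  have hu0 : (0:ℝ) < u := hu
  have he : 0 < Real.exp (-u) := Real.exp_pos _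
  rw [norm_mul, Real.norm_eq_abs, Real.norm_eq_abs, abs_of_pos he]
  have habs : |Real.log u| ≤ 2 * u ^ ((1/2:ℝ) - 1) + u ^ ((2:ℝ) - 1) := by
    have hr2 : u ^ ((2:ℝ) - 1) = u := by
      norm_num
    rcases le_or_gt 1 u with h1 | h1
    · have hl : 0 ≤ Real.log u := Real.log_nonneg h1
      rw [abs_of_nonneg hl, hr2]
      have h6 : Real.log u ≤ u - 1 := Real.log_le_sub_one_of_pos hu0
      have h7 : (0:ℝ) ≤ 2 * u ^ ((1/2:ℝ) - 1) := by positivity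
      generalize hB : u ^ ((1/2:ℝ)-1) = B at h7 ⊢
      linarith
    · have hl : Real.log u < 0 := Real.log_neg hu0 h1
      rw [abs_of_neg hl]
      have h2 : -Real.log u = 2 * Real.log (u ^ (-(1/2):ℝ)) := by
        rw [Real.log_rpow hu0]; ring
      have h3 : Real.log (u ^ (-(1/2):ℝ)) ≤ u ^ (-(1/2):ℝ) - 1 :=
        Real.log_le_sub_one_of_pos (Real.rpow_pos_of_pos hu0 _)
      have h4 : u ^ ((1/2:ℝ) - 1) = u ^ (-(1/2):ℝ) := by norm_num
      have h5 : (0:ℝ) ≤ u ^ ((2:ℝ) - 1) := by positivity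
      rw [h2, h4]
      generalize hB : u ^ (-(1/2):ℝ) = B at h3 ⊢
      generalize hC : u ^ ((2:ℝ)-1) = C at h5 ⊢
      linarith
  calc Real.exp (-u) * |Real.log u|
      ≤ Real.exp (-u) * (2 * u ^ ((1/2:ℝ) - 1) + u ^ ((2:ℝ) - 1)) :=
        mul_le_mul_of_nonneg_left habs he.le
    _ = 2 * (Real.exp (-u) * u ^ ((1/2:ℝ) - 1)) + Real.exp (-u) * u ^ ((2:ℝ) - 1) := by ring

lemma aux_int_exp {γ : ℝ} :
    IntegrableOn (fun u => Real.exp (-u)) (Ioi γ) := by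
  have := exp_neg_integrableOn_Ioi γ (b := 1) one_pos
  simpa using this

lemma aux_int_mul_id {γ : ℝ} (hγ : 0 ≤ γ) :
    IntegrableOn (fun u => Real.exp (-u) * u) (Ioi γ) := by
  have h := aux_int_rpow (s := 2) (γ := γ) (by norm_num) hγ
  refine h.congr_fun (fun u hu => ?_) measurableSet_Ioi
  have hu0 : (0:ℝ) < u := lt_of_le_of_lt hγ hu
  norm_num

lemma int_exp_mul_id : ∫ u in Ioi (1:ℝ), Real.exp (-u) * u = 2 * Real.exp (-1) := by
  have hderiv : ∀ x ∈ Ici (1:ℝ),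
      HasDerivAt (fun u => -(u + 1) * Real.exp (-u)) (Real.exp (-x) * x) x := by
    intro x _
    have h1 : HasDerivAt (fun u : ℝ => Real.exp (-u)) (-Real.exp (-x)) x := by
      simpa [Function.comp_def] using (Real.hasDerivAt_exp (-x)).comp x (hasDerivAt_neg x)
    have h2 : HasDerivAt (fun u : ℝ => -(u + 1)) (-1) x := by
      exact ((hasDerivAt_id' x).add_const 1).neg
    have := h2.mul h1
    refine this.congr_deriv ?_
    ring
  have htends : Filter.Tendsto (fun u : ℝ => -(u + 1) * Real.exp (-u)) Filter.atTop (nhds 0) := by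
    have h1 := Real.tendsto_pow_mul_exp_neg_atTop_nhds_zero 1
    have h2 := Real.tendsto_exp_neg_atTop_nhds_zero
    have h3 := (h1.add h2).neg
    simp only [pow_one, neg_zero] at h3
    · convert h3 using 2 with u
      · ring
      · norm_num
  have := integral_Ioi_of_hasDerivAt_of_tendsto' hderiv (aux_int_mul_id (by norm_num)) htends
  rw [this]
  norm_num

lemma log_integral_Ioi_one :
    ∫ u in Ioi (1:ℝ), Real.exp (-u) * Real.log u ≤ 2 * Real.exp (-2) := by
  have hstep : ∫ u in Ioi (1:ℝ), Real.exp (-u) * Real.log u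
      ≤ ∫ u in Ioi (1:ℝ), Real.exp (-1) * (Real.exp (-u) * u) := by
    refine setIntegral_mono_on (aux_int_log zero_le_one)
      ((aux_int_mul_id zero_le_one).const_mul _) measurableSet_Ioi fun u hu => ?_
    have hu1 : (1:ℝ) < u := hu
    have hu0 : (0:ℝ) < u := by linarith
    have hlog : Real.log u ≤ u * Real.exp (-1) := by
      have h1 : Real.log (u * Real.exp (-1)) ≤ u * Real.exp (-1) - 1 :=
        Real.log_le_sub_one_of_pos (by positivity)
      rw [Real.log_mul (ne_of_gt hu0) (ne_of_gt (Real.exp_pos _)), Real.log_exp] at h1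
      linarith
    calc Real.exp (-u) * Real.log u ≤ Real.exp (-u) * (u * Real.exp (-1)) :=
          mul_le_mul_of_nonneg_left hlog (Real.exp_pos _).le
      _ = Real.exp (-1) * (Real.exp (-u) * u) := by ring
  rw [integral_const_mul, int_exp_mul_id] at hstep
  calc ∫ u in Ioi (1:ℝ), Real.exp (-u) * Real.log u
      ≤ Real.exp (-1) * (2 * Real.exp (-1)) := hstep
    _ = 2 * Real.exp (-2) := by
        have : Real.exp (-1) * Real.exp (-1) = Real.exp (-2) := by
          rw [← Real.exp_add]; norm_num
        nlinarith [this]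


lemma log_integral_Ioc {γ : ℝ} (h0 : 0 < γ) (h1 : γ ≤ 1) :
    ∫ u in Ioc γ 1, Real.exp (-u) * Real.log u
      ≤ -3/4 + (γ - γ^2/4 - (γ * Real.log γ) * (1 - γ/2)) := by
  have hsub : Ioc γ 1 ⊆ Icc γ 1 := Ioc_subset_Icc_self
  have hcontOn : ContinuousOn (fun u => (1 - u) * Real.log u) (Icc γ 1) := by
    refine (continuousOn_const.sub continuousOn_id).mul (Real.continuousOn_log.mono ?_)
    intro x hx
    exact ne_of_gt (lt_of_lt_of_le h0 hx.1)
  have hint2 : IntegrableOn (fun u => (1 - u) * Real.log u) (Ioc γ 1) :=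
    (hcontOn.integrableOn_Icc).mono_set hsub
  have hstep : ∫ u in Ioc γ 1, Real.exp (-u) * Real.log u
      ≤ ∫ u in Ioc γ 1, (1 - u) * Real.log u := by
    refine setIntegral_mono_on ((aux_int_log h0.le).mono_set Ioc_subset_Ioi_self)
      hint2 measurableSet_Ioc fun u hu => ?_
    have hu0 : 0 < u := lt_trans h0 hu.1
    have hu1 : u ≤ 1 := hu.2
    have hlog : Real.log u ≤ 0 := Real.log_nonpos hu0.le hu1
    have hexp : 1 - u ≤ Real.exp (-u) := by
      have := Real.add_one_le_exp (-u)
      linarith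
    exact mul_le_mul_of_nonpos_right hexp hlog
  have hcalc : ∫ u in Ioc γ 1, (1 - u) * Real.log u
      = -3/4 + (γ - γ^2/4 - (γ * Real.log γ) * (1 - γ/2)) := by
    have huIcc : Set.uIcc γ 1 = Icc γ 1 := Set.uIcc_of_le h1
    have hderiv : ∀ u ∈ Set.uIcc γ 1,
        HasDerivAt (fun x => (x - x^2/2) * Real.log x - x + x^2/4) ((1 - u) * Real.log u) u := by
      intro u hu
      rw [huIcc] at hu
      have hu0 : 0 < u := lt_of_lt_of_le h0 hu.1
      have h1' : HasDerivAt (fun x : ℝ => x - x^2/2) (1 - u) u := by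
        simpa [Pi.sub_def] using ((hasDerivAt_id' u).sub ((hasDerivAt_pow 2 u).div_const 2))
      have h2' : HasDerivAt Real.log u⁻¹ u := Real.hasDerivAt_log (ne_of_gt hu0)
      have h3' : HasDerivAt (fun x : ℝ => (x - x^2/2) * Real.log x)
          ((1 - u) * Real.log u + (u - u^2/2) * u⁻¹) u := h1'.mul h2'
      have h4' : HasDerivAt (fun x : ℝ => x^2/4) (u/2) u := by
        have := (hasDerivAt_pow 2 u).div_const 4
        refine this.congr_deriv ?_
        norm_num
        ring
      have := (h3'.sub (hasDerivAt_id u)).add h4'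
      refine this.congr_deriv ?_
      field_simp
      ring
    have hInt : IntervalIntegrable (fun u => (1 - u) * Real.log u) volume γ 1 := by
      rw [intervalIntegrable_iff_integrableOn_Ioc_of_le h1]
      exact hint2
    have := intervalIntegral.integral_eq_sub_of_hasDerivAt hderiv hInt
    rw [intervalIntegral.integral_of_le h1] at this
    rw [this, Real.log_one]
    ring
  linarith

lemma f_mono {γ : ℝ} (h0 : 0 < γ) (h1 : γ ≤ 19/100) :
    γ - γ^2/4 - (γ * Real.log γ) * (1 - γ/2)
      ≤ (19/100 : ℝ) - (19/100)^2/4 - ((19/100) * Real.log (19/100)) * (1 - (19/100)/2) := by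
  set f : ℝ → ℝ := fun x => x - x^2/4 - (x * Real.log x) * (1 - x/2) with hf
  have hmono : StrictMonoOn f (Icc (0:ℝ) (19/100)) := by
    refine strictMonoOn_of_deriv_pos (convex_Icc _ _) ?_ ?_
    · apply Continuous.continuousOn
      exact (continuous_id.sub ((continuous_pow 2).div_const 4)).sub
        (Real.continuous_mul_log.mul (continuous_const.sub (continuous_id.div_const 2)))
    · intro x hx
      rw [interior_Icc] at hx
      obtain ⟨hx0, hx1⟩ := hx
      have hlog : Real.log x < 0 := Real.log_neg hx0 (by linarith)
      have hD : HasDerivAt f (-Real.log x * (1 - x)) x := by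
        have h1 : HasDerivAt (fun y : ℝ => y * Real.log y) (Real.log x + 1) x :=
          Real.hasDerivAt_mul_log (ne_of_gt hx0)
        have h2 : HasDerivAt (fun y : ℝ => 1 - y/2) (-(1/2)) x := by
          simpa [Pi.sub_def] using (hasDerivAt_const x (1:ℝ)).sub ((hasDerivAt_id' x).div_const 2)
        have h3 := h1.mul h2
        have h4 : HasDerivAt (fun y : ℝ => y - y^2/4) (1 - x/2) x := by
          have := (hasDerivAt_id x).sub ((hasDerivAt_pow 2 x).div_const 4)
          refine this.congr_deriv ?_
          norm_num
          ring
        have := h4.sub h3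
        refine this.congr_deriv ?_
        ring
      rw [hD.deriv]
      have : 0 < -Real.log x := by linarith
      nlinarith
  have h19 : (19/100 : ℝ) ∈ Icc (0:ℝ) (19/100) := by constructor <;> norm_num
  have hγm : γ ∈ Icc (0:ℝ) (19/100) := ⟨h0.le, h1⟩
  rcases eq_or_lt_of_le h1 with h | h
  · rw [h]
  · exact le_of_lt (hmono hγm h19 h)

lemma exp_two_lb : (199/27 : ℝ) ≤ Real.exp 2 := by
  have he : (2.7182818:ℝ) < Real.exp 1 := by
    have := Real.exp_one_gt_d9
    norm_num at this ⊢
    linarith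
  have h2 : Real.exp 2 = Real.exp 1 * Real.exp 1 := by
    rw [← Real.exp_add]; norm_num
  nlinarith

lemma log_19_100_bounds : Real.log (19/100) ≥ -(17/10) := by
  have h15 : Real.exp (15/100) * (85/100) ≤ 1 := by
    have h := Real.add_one_le_exp (-(15/100) : ℝ)
    have hm : Real.exp (15/100 : ℝ) * Real.exp (-(15/100) : ℝ) = 1 := by
      rw [← Real.exp_add]; norm_num
    nlinarith [Real.exp_pos (15/100 : ℝ)]
  have hkey : Real.exp (17/10 : ℝ) * (Real.exp (15/100) * Real.exp (15/100)) = Real.exp 2 := by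
    rw [← Real.exp_add, ← Real.exp_add]; norm_num
  have hexp : (100/19 : ℝ) ≤ Real.exp (17/10) := by
    have hp := Real.exp_pos (15/100 : ℝ)
    have hq := Real.exp_pos (17/10 : ℝ)
    nlinarith [exp_two_lb]
  have hlog : Real.log (100/19 : ℝ) ≤ 17/10 :=
    (Real.log_le_iff_le_exp (by norm_num)).2 hexp
  have : Real.log (19/100 : ℝ) = -Real.log (100/19 : ℝ) := by
    rw [← Real.log_inv]; norm_num
  rw [this]
  linarith

lemma exp_neg_two_bound : Real.exp (-2) ≤ 27/199 := by
  have h := exp_two_lb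
  have hm : Real.exp (-2 : ℝ) * Real.exp (2:ℝ) = 1 := by
    rw [← Real.exp_add]; norm_num
  nlinarith [Real.exp_pos (-2 : ℝ)]

lemma K_nonpos {γ : ℝ} (h0 : 0 < γ) (h1 : γ ≤ 19/100) :
    ∫ u in Ioi γ, Real.exp (-u) * Real.log u ≤ 0 := by
  have hγ1 : γ ≤ 1 := le_trans h1 (by norm_num)
  have hsplit : ∫ u in Ioi γ, Real.exp (-u) * Real.log u
      = (∫ u in Ioc γ 1, Real.exp (-u) * Real.log u)
        + ∫ u in Ioi (1:ℝ), Real.exp (-u) * Real.log u := by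
    rw [← setIntegral_union (Ioc_disjoint_Ioi le_rfl) measurableSet_Ioi
      ((aux_int_log h0.le).mono_set Ioc_subset_Ioi_self) (aux_int_log zero_le_one),
      Ioc_union_Ioi_eq_Ioi hγ1]
  rw [hsplit]
  have hA := log_integral_Ioc h0 hγ1
  have hB := log_integral_Ioi_one
  have hC := f_mono h0 h1
  have hD := log_19_100_bounds
  have hE := exp_neg_two_bound
  nlinarith

lemma gamma_lower {α γ : ℝ} (hα0 : 0 < α) (hα1 : α ≤ 1) (h0 : 0 < γ) (h1 : γ ≤ 19/100) :
    Real.exp (-γ) ≤ uincGamma α γ := by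
  have hintlog : IntegrableOn (fun u => Real.exp (-u) * Real.log u) (Ioi γ) :=
    aux_int_log h0.le
  have hint2 : IntegrableOn
      (fun u => Real.exp (-u) + (α - 1) * (Real.exp (-u) * Real.log u)) (Ioi γ) :=
    aux_int_exp.add (hintlog.const_mul (α - 1))
  have hmono : ∫ u in Ioi γ, (Real.exp (-u) + (α - 1) * (Real.exp (-u) * Real.log u))
      ≤ uincGamma α γ := by
    refine setIntegral_mono_on hint2 (aux_int_rpow hα0 h0.le) measurableSet_Ioi fun u hu => ?_
    have hu0 : (0:ℝ) < u := lt_trans h0 hu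
    rw [Real.rpow_def_of_pos hu0]
    have h1' : 1 + Real.log u * (α - 1) ≤ Real.exp (Real.log u * (α - 1)) := by
      have := Real.add_one_le_exp (Real.log u * (α - 1))
      linarith
    have he : 0 < Real.exp (-u) := Real.exp_pos _
    nlinarith [mul_le_mul_of_nonneg_left h1' he.le]
  have hval : ∫ u in Ioi γ, (Real.exp (-u) + (α - 1) * (Real.exp (-u) * Real.log u))
      = Real.exp (-γ) + (α - 1) * ∫ u in Ioi γ, Real.exp (-u) * Real.log u := by
    rw [integral_add aux_int_exp (hintlog.const_mul (α - 1)), integral_const_mul,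
      integral_exp_neg_Ioi]
  rw [hval] at hmono
  have hK := K_nonpos h0 h1
  nlinarith

lemma gamma_small {γ : ℝ} (h0 : 0 < γ)
    (hcond : (2 + γ) * Real.log (2 + γ) - γ * Real.log γ ≤ 2) : γ ≤ 19/100 := by
  by_contra hcon
  push_neg at hcon
  set H : ℝ → ℝ := fun x => (2 + x) * Real.log (2 + x) - x * Real.log x with hH
  have hmono : StrictMonoOn H (Ici (0:ℝ)) := by
    refine strictMonoOn_of_deriv_pos (convex_Ici _) ?_ ?_
    · apply Continuous.continuousOn
      exact (Real.continuous_mul_log.comp (continuous_const.add continuous_id)).sub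
        Real.continuous_mul_log
    · intro x hx
      rw [interior_Ici] at hx
      have hx0 : (0:ℝ) < x := hx
      have hx2 : (0:ℝ) < 2 + x := by linarith
      have hD : HasDerivAt H (Real.log (2 + x) - Real.log x) x := by
        have h1 : HasDerivAt (fun y : ℝ => (2 + y) * Real.log (2 + y))
            (Real.log (2 + x) + 1) x := by
          have hcomp := (Real.hasDerivAt_mul_log (ne_of_gt hx2)).comp x
            ((hasDerivAt_id x).const_add 2)
          simpa [Function.comp_def] using hcomp
        have h2 : HasDerivAt (fun y : ℝ => y * Real.log y) (Real.log x + 1) x :=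
          Real.hasDerivAt_mul_log (ne_of_gt hx0)
        have := h1.sub h2
        refine this.congr_deriv ?_
        ring
      rw [hD.deriv]
      have : Real.log x < Real.log (2 + x) := Real.log_lt_log hx0 (by linarith)
      linarith
  have hlt : H (19/100) < H γ :=
    hmono (by norm_num) (le_of_lt (lt_trans (by norm_num) hcon) : γ ∈ Ici (0:ℝ)) hcon
  have hnum : 2 < H (19/100) := by
    have hlog2 : (0.6931471803 : ℝ) < Real.log 2 := Real.log_two_gt_d9
    have e1 : Real.log (2 + 19/100 : ℝ) = Real.log 2 + Real.log (219/200) := by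
      rw [← Real.log_mul] <;> norm_num
    have e2 : (19/219 : ℝ) ≤ Real.log (219/200 : ℝ) := by
      have h := Real.log_le_sub_one_of_pos (show (0:ℝ) < 200/219 by norm_num)
      rw [show (200/219:ℝ) = (219/200)⁻¹ by norm_num, Real.log_inv] at h
      linarith
    have e3 : Real.log (19/100 : ℝ) = -(2 * Real.log 2 + Real.log (25/19)) := by
      have : Real.log (100/19 : ℝ) = 2 * Real.log 2 + Real.log (25/19) := by
        rw [show (100/19:ℝ) = 2 * 2 * (25/19) by norm_num,
          Real.log_mul (by norm_num) (by norm_num), Real.log_mul (by norm_num) (by norm_num)]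
        ring
      rw [show (19/100:ℝ) = (100/19)⁻¹ by norm_num, Real.log_inv, this]
    have e4 : (6/25 : ℝ) ≤ Real.log (25/19 : ℝ) := by
      have h := Real.log_le_sub_one_of_pos (show (0:ℝ) < 19/25 by norm_num)
      rw [show (19/25:ℝ) = (25/19)⁻¹ by norm_num, Real.log_inv] at h
      linarith
    show (2:ℝ) < (2 + 19/100) * Real.log (2 + 19/100) - (19/100) * Real.log (19/100)
    rw [e1, e3]
    nlinarith
  linarith

end Aux

/-- The inequality `J(α'(γ), γ) ≤ α*` of the paper's Lemma 14: with `0 < a ≤ 1`,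
`γ > 0` satisfying `(2+γ)·ln(2+γ) − γ·ln γ ≤ 2`, `w` satisfying `w·e^w = γ^a·ln γ`,
`c = w / ln γ`, `α' = a − c` and `0 < α' ≤ 1`, one has
`α' + e^{−γ}·γ^{α'}/Γ(α', γ) ≤ a`. -/
theorem stmt_10 (a γ w : ℝ) (ha0 : 0 < a) (ha1 : a ≤ 1) (hγ : 0 < γ)
    (hcond : (2 + γ) * Real.log (2 + γ) - γ * Real.log γ ≤ 2)
    (hw : w * Real.exp w = γ ^ a * Real.log γ)
    (hα'0 : 0 < a - w / Real.log γ) (hα'1 : a - w / Real.log γ ≤ 1) :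
    (a - w / Real.log γ) +
        Real.exp (-γ) * γ ^ (a - w / Real.log γ) /
          uincGamma (a - w / Real.log γ) γ ≤ a := by
  have hsmall : γ ≤ 19/100 := gamma_small hγ hcond
  have hγ1 : γ < 1 := lt_of_le_of_lt hsmall (by norm_num)
  have hL : Real.log γ < 0 := Real.log_neg hγ hγ1
  have hLne : Real.log γ ≠ 0 := ne_of_lt hL
  have hwneg : w < 0 := by
    by_contra h
    push_neg at h
    have h1 : 0 ≤ w * Real.exp w := mul_nonneg h (Real.exp_pos w).le
    have h2 : γ ^ a * Real.log γ < 0 :=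
      mul_neg_of_pos_of_neg (Real.rpow_pos_of_pos hγ a) hL
    linarith [hw ▸ h1]
  have hc : 0 < w / Real.log γ := div_pos_of_neg_of_neg hwneg hL
  -- key identity : γ ^ (a - w / log γ) = w / log γ
  have hkey : γ ^ (a - w / Real.log γ) = w / Real.log γ := by
    have h1 : γ ^ (a - w / Real.log γ) = γ ^ a * γ ^ (-(w / Real.log γ)) := by
      rw [← Real.rpow_add hγ]; ring_nf
    have h2 : γ ^ (-(w / Real.log γ)) = Real.exp (-w) := by
      rw [Real.rpow_def_of_pos hγ]
      congr 1
      field_simp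
    rw [h1, h2]
    have h3 : γ ^ a = w * Real.exp w / Real.log γ := by
      field_simp [hw]
      linarith
    rw [h3]
    rw [div_mul_eq_mul_div, mul_assoc, ← Real.exp_add]
    simp
  have hΓ : Real.exp (-γ) ≤ uincGamma (a - w / Real.log γ) γ :=
    gamma_lower hα'0 hα'1 hγ hsmall
  have hΓpos : 0 < uincGamma (a - w / Real.log γ) γ := lt_of_lt_of_le (Real.exp_pos _) hΓ
  rw [hkey]
  have : Real.exp (-γ) * (w / Real.log γ) / uincGamma (a - w / Real.log γ) γ
      ≤ w / Real.log γ := by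
    rw [div_le_iff₀ hΓpos]
    calc Real.exp (-γ) * (w / Real.log γ) ≤ uincGamma (a - w / Real.log γ) γ * (w / Real.log γ) :=
      mul_le_mul_of_nonneg_right hΓ hc.le
    _ = w / Real.log γ * uincGamma (a - w / Real.log γ) γ := by ring
  linarith
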